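/- Assume condition (A): every infinite path of pairwise distinct vertices connected by edges of positive weight has infinite m-measure. If α > 0, p ∈ [1,∞), and u ∈ ℓ^p(V,m) satisfies (L̃+α)u ≥ 0, then u ≥ 0. -/
import Mathlib


/-- The formal Laplacian `L̃u(x) = (1/m(x)) ∑_y b(x,y)(u(x)-u(y)) + (c(x)/m(x))u(x)`. -/
noncomputable def formalL {V : Type*} (b : V → V → ℝ) (c m : V → ℝ) (u : V → ℝ) (x : V) : ℝ :=
  (1 / m x) * ∑' y, b x y * (u x - u y) + (c x / m x) * u x

/-- Under condition (A) (any infinite path of pairwise distinct vertices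
has infinite measure), if `α > 0`, `p ∈ [1,∞)` and `u ∈ ℓᵖ(V,m)` satisfies
`(L̃+α)u ≥ 0`, then `u ≥ 0`. -/
theorem lp_supersolution_nonneg
    (V : Type*) [Countable V] (m : V → ℝ) (hm : ∀ x, 0 < m x)
    (b : V → V → ℝ) (c : V → ℝ)
    (hb_symm : ∀ x y, b x y = b y x) (hb_nonneg : ∀ x y, 0 ≤ b x y)
    (hb_diag : ∀ x, b x x = 0) (hb_sum : ∀ x, Summable fun y => b x y)
    (hc : ∀ x, 0 ≤ c x)
    -- condition (A)
    (hA : ∀ x : ℕ → V, Function.Injective x → (∀ n, 0 < b (x n) (x (n + 1))) →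
      ¬ Summable (fun n => m (x n)))
    (α : ℝ) (hα : 0 < α) (p : ℝ) (hp : 1 ≤ p)
    (u : V → ℝ)
    (hu_lp : Summable fun x => m x * |u x| ^ p)
    (hu_dom : ∀ x, Summable fun y => b x y * |u y|)
    (hu_super : ∀ x, 0 ≤ formalL b c m u x + α * u x) :
    ∀ x, 0 ≤ u x := by
  by_contra hx0
  push_neg at hx0
  obtain ⟨x0, hx0⟩ := hx0
  have hp0 : (0:ℝ) ≤ p := le_trans zero_le_one hp
  -- key step: from a negative vertex, there's a neighbor with smaller value
  have step : ∀ x, u x < 0 → ∃ y, 0 < b x y ∧ u y < u x := by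
    intro x hx
    by_contra h
    push_neg at h
    have hsum_uy : Summable (fun y => b x y * u y) := by
      apply Summable.of_abs
      have : (fun y => |b x y * u y|) = fun y => b x y * |u y| := by
        funext y
        rw [abs_mul, abs_of_nonneg (hb_nonneg x y)]
      rw [this]; exact hu_dom x
    have hsum_ux : Summable (fun y => b x y * u x) := (hb_sum x).mul_right (u x)
    have hsuper := hu_super x
    unfold formalL at hsuper
    set A := ∑' y, b x y * (u x - u y) with hA_def
    have hmx := hm x
    have hA_pos : 0 < A := by
      have h1 : 0 ≤ A + c x * u x + α * m x * u x := by
        have := mul_le_mul_of_nonneg_left hsuper (le_of_lt hmx)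
        have hmne : m x ≠ 0 := ne_of_gt hmx
        field_simp at this
        nlinarith [this]
      nlinarith [mul_nonpos_of_nonneg_of_nonpos (hc x) (le_of_lt hx),
        mul_pos hα hmx, mul_neg_of_pos_of_neg (mul_pos hα hmx) hx]
    have hA_eq : A = (∑' y, b x y * u x) - ∑' y, b x y * u y := by
      rw [hA_def, ← Summable.tsum_sub hsum_ux hsum_uy]
      congr 1; funext y; ring
    have hle : (∑' y, b x y * u x) ≤ ∑' y, b x y * u y := by
      apply Summable.tsum_le_tsum _ hsum_ux hsum_uy
      intro y
      rcases (hb_nonneg x y).eq_or_lt with hb0 | hbp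
      · rw [← hb0]; simp
      · exact mul_le_mul_of_nonneg_left (h y hbp) (le_of_lt hbp)
    rw [hA_eq] at hA_pos
    linarith
  choose! f hf1 hf2 using step
  set seq : ℕ → V := fun n => f^[n] x0 with hseq_def
  have hseq0 : seq 0 = x0 := rfl
  have hseq_succ : ∀ n, seq (n + 1) = f (seq n) := by
    intro n; simp only [hseq_def, Function.iterate_succ_apply']
  have hneg : ∀ n, u (seq n) < 0 := by
    intro n
    induction n with
    | zero => simpa [hseq0] using hx0
    | succ k ih =>
      rw [hseq_succ]
      exact lt_trans (hf2 _ ih) ih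
  have hdec : ∀ n, u (seq (n + 1)) < u (seq n) := by
    intro n; rw [hseq_succ]; exact hf2 _ (hneg n)
  have hanti : StrictAnti (fun n => u (seq n)) := strictAnti_nat_of_succ_lt hdec
  have hinj : Function.Injective seq := fun a b hab => hanti.injective (congrArg u hab)
  have hedge : ∀ n, 0 < b (seq n) (seq (n + 1)) := by
    intro n; rw [hseq_succ]; exact hf1 _ (hneg n)
  have hle0 : ∀ n, u (seq n) ≤ u x0 := by
    intro n
    have := hanti.antitone (Nat.zero_le n)
    simpa [hseq0] using this
  -- summability contradiction
  have hS : Summable (fun n => m (seq n) * |u (seq n)| ^ p) :=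
    hu_lp.comp_injective hinj
  have hpos0 : (0:ℝ) < |u x0| ^ p := Real.rpow_pos_of_pos (abs_pos.mpr (ne_of_lt hx0)) p
  have hSm : Summable (fun n => m (seq n)) := by
    apply Summable.of_nonneg_of_le (fun n => le_of_lt (hm _))
      (f := fun n => (m (seq n) * |u (seq n)| ^ p) * (|u x0| ^ p)⁻¹)
    · intro n
      have habs : |u x0| ≤ |u (seq n)| := by
        rw [abs_of_neg hx0, abs_of_neg (hneg n)]
        linarith [hle0 n]
      have hr : |u x0| ^ p ≤ |u (seq n)| ^ p :=
        Real.rpow_le_rpow (abs_nonneg _) habs hp0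
      have hmul : m (seq n) * |u x0| ^ p ≤ m (seq n) * |u (seq n)| ^ p :=
        mul_le_mul_of_nonneg_left hr (le_of_lt (hm _))
      rw [← div_eq_mul_inv, le_div_iff₀ hpos0]
      exact hmul
    · exact hS.mul_right _
  exact hA seq hinj hedge hSm
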